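/- arXiv:2212.05212 — 2 statements merged into one kernel-verified Lean document; each statement's English description precedes it below -/
import Mathlib

section
/- Let 0 < α₁ < α₂, 0 < α₁ p₁ = α₂ p₂ with 1 ≤ p₂ < p₁ < ∞. Then for every f ∈ Ḃ^0_{∞,∞}(ℝⁿ) ∩ Ḃ^{α₂}_{p₂,p₂}(ℝⁿ): ‖f‖_{Ḃ^{α₁}_{p₁,p₁}} ≤ ‖f‖_{Ḃ^0_{∞,∞}}^{1-α₁/α₂} ‖f‖_{Ḃ^{α₂}_{p₂,p₂}}^{α₁/α₂}. -/
open MeasureTheory ENNReal Metric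
open scoped FourierTransform NNReal

noncomputable section

/-- The dilated Littlewood–Paley piece `φ_j(x) = 2^(-jn) • φ(2^(-j) • x)`. -/
def lpPiece (n : ℕ) (φ : EuclideanSpace ℝ (Fin n) → ℂ) (j : ℤ) :
    EuclideanSpace ℝ (Fin n) → ℂ :=
  fun x => (((2:ℝ) ^ (-(j:ℝ) * (n:ℝ)) : ℝ) : ℂ) * φ (((2:ℝ) ^ (-(j:ℝ))) • x)

/-- The Littlewood–Paley block `φ_j * f` (convolution) for a real-valued `f`. -/
def lpBlock (n : ℕ) (φ : EuclideanSpace ℝ (Fin n) → ℂ)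
    (f : EuclideanSpace ℝ (Fin n) → ℝ) (j : ℤ) : EuclideanSpace ℝ (Fin n) → ℂ :=
  fun x => ∫ y, lpPiece n φ j y * (f (x - y) : ℂ)

/-- `φ` generates a Littlewood–Paley (dyadic) decomposition: its Fourier transform is
supported in the annulus `{1/2 < ‖ξ‖ < 2}` and the dyadic dilates sum to `1` away from `0`. -/
def IsLPFamily (n : ℕ) (φ : EuclideanSpace ℝ (Fin n) → ℂ) : Prop :=
  (∀ ξ : EuclideanSpace ℝ (Fin n), 𝓕 φ ξ ≠ 0 → 1/2 < ‖ξ‖ ∧ ‖ξ‖ < 2) ∧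
  ∀ ξ : EuclideanSpace ℝ (Fin n), ξ ≠ 0 →
    HasSum (fun j : ℤ => 𝓕 φ (((2:ℝ) ^ (j:ℝ)) • ξ)) 1

/-- Homogeneous Besov norm of `Ḃ^s_{∞,∞}`: `sup_j 2^(js) ‖φ_j * f‖_{L^∞}`. -/
def besovNormInf (n : ℕ) (φ : EuclideanSpace ℝ (Fin n) → ℂ) (s : ℝ)
    (f : EuclideanSpace ℝ (Fin n) → ℝ) : ℝ≥0∞ :=
  ⨆ j : ℤ, ENNReal.ofReal ((2:ℝ) ^ ((j:ℝ) * s)) * eLpNorm (lpBlock n φ f j) ∞ volume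

/-- Homogeneous Besov norm of `Ḃ^s_{p,p}`: `(Σ_j (2^(js) ‖φ_j * f‖_{L^p})^p)^(1/p)`. -/
def besovNormP (n : ℕ) (φ : EuclideanSpace ℝ (Fin n) → ℂ) (s p : ℝ)
    (f : EuclideanSpace ℝ (Fin n) → ℝ) : ℝ≥0∞ :=
  (∑' j : ℤ, (ENNReal.ofReal ((2:ℝ) ^ ((j:ℝ) * s)) *
    eLpNorm (lpBlock n φ f j) (ENNReal.ofReal p) volume) ^ p) ^ (1/p)

/-- Homogeneous Hölder seminorm of `Ċ^α`. -/
def holderSemi (n : ℕ) (α : ℝ) (f : EuclideanSpace ℝ (Fin n) → ℝ) : ℝ≥0∞ :=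
  ⨆ x, ⨆ y, ENNReal.ofReal (|f x - f y| / ‖x - y‖ ^ α)

/-- The Gagliardo seminorm of the homogeneous fractional Sobolev space `Ẇ^{α,p}`. -/
def gagliardo (n : ℕ) (α p : ℝ) (f : EuclideanSpace ℝ (Fin n) → ℝ) : ℝ≥0∞ :=
  (∫⁻ x, ∫⁻ h, (‖f (x + h) - f x‖₊ : ℝ≥0∞) ^ p /
      (‖h‖₊ : ℝ≥0∞) ^ ((n:ℝ) + α * p)) ^ (1/p)

/-- The Hardy–Littlewood maximal function. -/
def maximal (n : ℕ) (g : EuclideanSpace ℝ (Fin n) → ℝ)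
    (x : EuclideanSpace ℝ (Fin n)) : ℝ≥0∞ :=
  ⨆ (r : ℝ) (_ : 0 < r), (volume (ball x r))⁻¹ * ∫⁻ y in ball x r, (‖g y‖₊ : ℝ≥0∞)

/-- The local oscillation functional
`G_{α,p}(f)(x) = sup_{ε>0} (⨍_{B(0,ε)} |f(x)-f(x-y)|^p dy / ε^(αp))^(1/p)`. -/
def gFun (n : ℕ) (α p : ℝ) (f : EuclideanSpace ℝ (Fin n) → ℝ)
    (x : EuclideanSpace ℝ (Fin n)) : ℝ≥0∞ :=
  ⨆ (ε : ℝ) (_ : 0 < ε),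
    ((volume (ball (0 : EuclideanSpace ℝ (Fin n)) ε))⁻¹ *
      ∫⁻ y in ball (0 : EuclideanSpace ℝ (Fin n)) ε,
        (‖f x - f (x - y)‖₊ : ℝ≥0∞) ^ p / ENNReal.ofReal (ε ^ (α * p))) ^ (1/p)

/-- The average `⨍_{B(0,2|z|)} |f x - f (x+y)| dy`. -/
def avgDiff (n : ℕ) (f : EuclideanSpace ℝ (Fin n) → ℝ)
    (x z : EuclideanSpace ℝ (Fin n)) : ℝ≥0∞ :=
  (volume (ball (0 : EuclideanSpace ℝ (Fin n)) (2 * ‖z‖)))⁻¹ *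
    ∫⁻ y in ball (0 : EuclideanSpace ℝ (Fin n)) (2 * ‖z‖), (‖f x - f (x + y)‖₊ : ℝ≥0∞)

/-- The `L^p`-norm of the gradient `Df`. -/
def gradNorm (n : ℕ) (p : ℝ≥0∞) (f : EuclideanSpace ℝ (Fin n) → ℝ) : ℝ≥0∞ :=
  eLpNorm (fun x => ‖fderiv ℝ f x‖) p volume


lemma interp_aux {X : Type*} [MeasurableSpace X] (μ : Measure X) (g : X → ℂ)
    {p₁ p₂ : ℝ} (h0 : 0 < p₂) (h12 : p₂ ≤ p₁) (hM : eLpNorm g ∞ μ ≠ ∞) :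
    eLpNorm g (ENNReal.ofReal p₁) μ ^ p₁ ≤
      eLpNorm g (ENNReal.ofReal p₂) μ ^ p₂ * eLpNorm g ∞ μ ^ (p₁ - p₂) := by
  have hp₁ : 0 < p₁ := h0.trans_le h12
  set M : ℝ≥0∞ := eLpNorm g ∞ μ with hMdef
  have hMess : M = eLpNormEssSup g μ := eLpNorm_exponent_top
  have e1 : eLpNorm g (ENNReal.ofReal p₁) μ ^ p₁ = ∫⁻ x, (‖g x‖₊ : ℝ≥0∞) ^ p₁ ∂μ := by
    rw [eLpNorm_eq_lintegral_rpow_enorm_toReal (by simpa using hp₁) ENNReal.ofReal_ne_top,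
      ENNReal.toReal_ofReal hp₁.le, one_div, ← ENNReal.rpow_mul,
      inv_mul_cancel₀ hp₁.ne', ENNReal.rpow_one]
    rfl
  have e2 : eLpNorm g (ENNReal.ofReal p₂) μ ^ p₂ = ∫⁻ x, (‖g x‖₊ : ℝ≥0∞) ^ p₂ ∂μ := by
    rw [eLpNorm_eq_lintegral_rpow_enorm_toReal (by simpa using h0) ENNReal.ofReal_ne_top,
      ENNReal.toReal_ofReal h0.le, one_div, ← ENNReal.rpow_mul,
      inv_mul_cancel₀ h0.ne', ENNReal.rpow_one]
    rfl
  rw [e1, e2]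
  have hsub : (0:ℝ) ≤ p₁ - p₂ := by linarith
  calc ∫⁻ x, (‖g x‖₊ : ℝ≥0∞) ^ p₁ ∂μ
      ≤ ∫⁻ x, (‖g x‖₊ : ℝ≥0∞) ^ p₂ * M ^ (p₁ - p₂) ∂μ := by
        refine lintegral_mono_ae ?_
        filter_upwards [ae_le_eLpNormEssSup (f := g) (μ := μ)] with x hx
        calc (‖g x‖₊ : ℝ≥0∞) ^ p₁ = (‖g x‖₊ : ℝ≥0∞) ^ p₂ * (‖g x‖₊ : ℝ≥0∞) ^ (p₁ - p₂) := by
              rw [← ENNReal.rpow_add_of_nonneg _ _ h0.le hsub]; ring_nf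
          _ ≤ (‖g x‖₊ : ℝ≥0∞) ^ p₂ * M ^ (p₁ - p₂) := by
              gcongr
              rw [hMess]; exact_mod_cast hx
    _ = (∫⁻ x, (‖g x‖₊ : ℝ≥0∞) ^ p₂ ∂μ) * M ^ (p₁ - p₂) :=
        lintegral_mul_const' _ _ (ENNReal.rpow_ne_top_of_nonneg hsub hM)

/-- Besov interpolation: `‖f‖_{Ḃ^{α₁}_{p₁,p₁}} ≤ ‖f‖_{Ḃ^0_{∞,∞}}^{1-α₁/α₂} ‖f‖_{Ḃ^{α₂}_{p₂,p₂}}^{α₁/α₂}`. -/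
theorem stmt8 (n : ℕ) (α₁ α₂ p₁ p₂ : ℝ) (hα₁ : 0 < α₁) (h12 : α₁ < α₂)
    (hp₂ : 1 ≤ p₂) (hp : p₂ < p₁) (hrel : α₁ * p₁ = α₂ * p₂)
    (φ : EuclideanSpace ℝ (Fin n) → ℂ) (hφ : IsLPFamily n φ)
    (f : EuclideanSpace ℝ (Fin n) → ℝ)
    (hf0 : besovNormInf n φ 0 f < ∞) (hf2 : besovNormP n φ α₂ p₂ f < ∞) :
    besovNormP n φ α₁ p₁ f ≤
      besovNormInf n φ 0 f ^ (1 - α₁ / α₂) * besovNormP n φ α₂ p₂ f ^ (α₁ / α₂) := by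
  have hα₂ : 0 < α₂ := hα₁.trans h12
  have hp₂0 : 0 < p₂ := lt_of_lt_of_le one_pos hp₂
  have hp₁0 : 0 < p₁ := hp₂0.trans hp
  set C : ℝ≥0∞ := besovNormInf n φ 0 f with hC
  set N₂ : ℝ≥0∞ := besovNormP n φ α₂ p₂ f with hN₂
  have hCne : C ≠ ∞ := hf0.ne
  -- each ∞-block norm is bounded by C
  have hMle : ∀ j : ℤ, eLpNorm (lpBlock n φ f j) ∞ volume ≤ C := by
    intro j
    have : ENNReal.ofReal ((2:ℝ) ^ ((j:ℝ) * 0)) * eLpNorm (lpBlock n φ f j) ∞ volume ≤ C :=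
      le_iSup (fun j : ℤ => ENNReal.ofReal ((2:ℝ) ^ ((j:ℝ) * 0)) *
        eLpNorm (lpBlock n φ f j) ∞ volume) j
    simpa using this
  have hsub : (0:ℝ) ≤ p₁ - p₂ := by linarith
  -- termwise estimate
  have hterm : ∀ j : ℤ,
      (ENNReal.ofReal ((2:ℝ) ^ ((j:ℝ) * α₁)) *
        eLpNorm (lpBlock n φ f j) (ENNReal.ofReal p₁) volume) ^ p₁ ≤
      (ENNReal.ofReal ((2:ℝ) ^ ((j:ℝ) * α₂)) *
        eLpNorm (lpBlock n φ f j) (ENNReal.ofReal p₂) volume) ^ p₂ * C ^ (p₁ - p₂) := by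
    intro j
    have hMne : eLpNorm (lpBlock n φ f j) ∞ volume ≠ ∞ := ((hMle j).trans_lt hf0).ne
    have hpow : (ENNReal.ofReal ((2:ℝ) ^ ((j:ℝ) * α₁))) ^ p₁ =
        (ENNReal.ofReal ((2:ℝ) ^ ((j:ℝ) * α₂))) ^ p₂ := by
      rw [ENNReal.ofReal_rpow_of_pos (Real.rpow_pos_of_pos two_pos _),
        ENNReal.ofReal_rpow_of_pos (Real.rpow_pos_of_pos two_pos _),
        ← Real.rpow_mul (by norm_num : (0:ℝ) ≤ 2),
        ← Real.rpow_mul (by norm_num : (0:ℝ) ≤ 2), mul_assoc, mul_assoc, hrel]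
    calc (ENNReal.ofReal ((2:ℝ) ^ ((j:ℝ) * α₁)) *
          eLpNorm (lpBlock n φ f j) (ENNReal.ofReal p₁) volume) ^ p₁
        = (ENNReal.ofReal ((2:ℝ) ^ ((j:ℝ) * α₂))) ^ p₂ *
            eLpNorm (lpBlock n φ f j) (ENNReal.ofReal p₁) volume ^ p₁ := by
          rw [ENNReal.mul_rpow_of_nonneg _ _ hp₁0.le, hpow]
      _ ≤ (ENNReal.ofReal ((2:ℝ) ^ ((j:ℝ) * α₂))) ^ p₂ *
            (eLpNorm (lpBlock n φ f j) (ENNReal.ofReal p₂) volume ^ p₂ *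
              eLpNorm (lpBlock n φ f j) ∞ volume ^ (p₁ - p₂)) := by
          gcongr
          exact interp_aux volume _ hp₂0 hp.le hMne
      _ ≤ (ENNReal.ofReal ((2:ℝ) ^ ((j:ℝ) * α₂))) ^ p₂ *
            (eLpNorm (lpBlock n φ f j) (ENNReal.ofReal p₂) volume ^ p₂ * C ^ (p₁ - p₂)) := by
          gcongr
          exact hMle j
      _ = (ENNReal.ofReal ((2:ℝ) ^ ((j:ℝ) * α₂)) *
            eLpNorm (lpBlock n φ f j) (ENNReal.ofReal p₂) volume) ^ p₂ * C ^ (p₁ - p₂) := by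
          rw [ENNReal.mul_rpow_of_nonneg _ _ hp₂0.le, mul_assoc]
  -- sum
  have hsum : besovNormP n φ α₁ p₁ f ≤ (N₂ ^ p₂ * C ^ (p₁ - p₂)) ^ (1 / p₁) := by
    rw [besovNormP]
    gcongr (?_) ^ (1/p₁)
    calc (∑' j : ℤ, (ENNReal.ofReal ((2:ℝ) ^ ((j:ℝ) * α₁)) *
            eLpNorm (lpBlock n φ f j) (ENNReal.ofReal p₁) volume) ^ p₁)
        ≤ ∑' j : ℤ, (ENNReal.ofReal ((2:ℝ) ^ ((j:ℝ) * α₂)) *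
            eLpNorm (lpBlock n φ f j) (ENNReal.ofReal p₂) volume) ^ p₂ * C ^ (p₁ - p₂) :=
          ENNReal.tsum_le_tsum hterm
      _ = (∑' j : ℤ, (ENNReal.ofReal ((2:ℝ) ^ ((j:ℝ) * α₂)) *
            eLpNorm (lpBlock n φ f j) (ENNReal.ofReal p₂) volume) ^ p₂) * C ^ (p₁ - p₂) :=
          ENNReal.tsum_mul_right
      _ = N₂ ^ p₂ * C ^ (p₁ - p₂) := by
          rw [hN₂, besovNormP, ← ENNReal.rpow_mul, one_div, inv_mul_cancel₀ hp₂0.ne',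
            ENNReal.rpow_one]
  refine hsum.trans ?_
  have h1 : p₂ * (1 / p₁) = α₁ / α₂ := by
    field_simp
    nlinarith [hrel]
  have h2 : (p₁ - p₂) * (1 / p₁) = 1 - α₁ / α₂ := by
    field_simp
    nlinarith [hrel]
  rw [ENNReal.mul_rpow_of_nonneg _ _ (by positivity : (0:ℝ) ≤ 1/p₁),
    ← ENNReal.rpow_mul, ← ENNReal.rpow_mul, h1, h2, mul_comm]
end
end

section
/- Pointwise estimate via gradient: let 0 < α₁ < 1 and p₁ ≥ 1. For f ∈ C¹ (or f weakly differentiable with |Df| locally integrable) and any x ∈ ℝⁿ: ∫_{ℝⁿ} ( ⨍_{B(0,2|z|)} |f(x)-f(x+y)| dy )^{p₁} dz/|z|^{n+α₁p₁} ≤ C [M(f)(x)]^{(1-α₁)p₁} [M(|Df|)(x)]^{α₁p₁}. -/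
open MeasureTheory ENNReal Metric
open scoped FourierTransform NNReal

noncomputable section

namespace Stmt13Aux

open MeasureTheory ENNReal Metric
open scoped NNReal

noncomputable section

variable {n : ℕ}

local notation "E" => EuclideanSpace ℝ (Fin n)

lemma my_rpow_ne_top {x : ℝ≥0∞} (hx0 : x ≠ 0) (hxt : x ≠ ⊤) (y : ℝ) : x ^ y ≠ ⊤ := by
  simp [ENNReal.rpow_eq_top_iff, hx0, hxt]

lemma my_rpow_ne_zero {x : ℝ≥0∞} {q : ℝ} (hx : x ≠ 0) (hq : 0 < q) : x ^ q ≠ 0 := by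
  simp [ENNReal.rpow_eq_zero_iff, hx, hq, asymm hq]

lemma my_lintegral_comp_smul {F : E → ℝ≥0∞} (hF : Measurable F) {t : ℝ} (ht : t ≠ 0) :
    ∫⁻ y, F (t • y) = ENNReal.ofReal |((t ^ n : ℝ))⁻¹| * ∫⁻ z, F z := by
  rw [← lintegral_map hF (measurable_const_smul t), Measure.map_addHaar_smul volume ht,
    lintegral_smul_measure, finrank_euclideanSpace_fin, smul_eq_mul]

lemma my_scale (S T : Set E) (hT : MeasurableSet T) {R : ℝ} (hR : 0 < R) (s : ℝ)
    (hST : ∀ y : E, R • y ∈ T ↔ y ∈ S) :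
    ∫⁻ z in T, (‖z‖₊ : ℝ≥0∞) ^ s
      = ENNReal.ofReal (R ^ n) * ENNReal.ofReal R ^ s *
        ∫⁻ z in S, (‖z‖₊ : ℝ≥0∞) ^ s := by
  have hS : MeasurableSet S := by
    have : S = (fun y : E => R • y) ⁻¹' T := by
      ext y; simp [hST y]
    rw [this]
    exact hT.preimage (measurable_const_smul R)
  have hF : Measurable fun z : E => T.indicator (fun z => (‖z‖₊ : ℝ≥0∞) ^ s) z :=
    (measurable_nnnorm.coe_nnreal_ennreal.pow_const s).indicator hT
  have key := my_lintegral_comp_smul hF (t := R) hR.ne'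
  have hpt : ∀ y : E, T.indicator (fun z => (‖z‖₊ : ℝ≥0∞) ^ s) (R • y)
      = ENNReal.ofReal R ^ s * S.indicator (fun z => (‖z‖₊ : ℝ≥0∞) ^ s) y := by
    intro y
    by_cases hy : y ∈ S
    · rw [Set.indicator_of_mem ((hST y).2 hy), Set.indicator_of_mem hy]
      have h1 : (‖R • y‖₊ : ℝ≥0∞) = ENNReal.ofReal R * (‖y‖₊ : ℝ≥0∞) := by
        rw [nnnorm_smul, ENNReal.coe_mul, ← enorm_eq_nnnorm R, Real.enorm_eq_ofReal hR.le]
      rw [h1, ENNReal.mul_rpow_of_ne_top ENNReal.ofReal_ne_top coe_ne_top]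
    · rw [Set.indicator_of_notMem (fun h => hy ((hST y).1 h)), Set.indicator_of_notMem hy,
        mul_zero]
  rw [lintegral_congr hpt,
    lintegral_const_mul' _ _ (my_rpow_ne_top (ENNReal.ofReal_pos.2 hR).ne' ENNReal.ofReal_ne_top s),
    lintegral_indicator hS _, lintegral_indicator hT _] at key
  have hRn : ENNReal.ofReal |((R ^ n : ℝ))⁻¹| = (ENNReal.ofReal (R ^ n))⁻¹ := by
    rw [abs_of_pos (by positivity), ENNReal.ofReal_inv_of_pos (by positivity)]
  rw [hRn] at key
  have hRn0 : ENNReal.ofReal (R ^ n) ≠ 0 := (ENNReal.ofReal_pos.2 (by positivity)).ne'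
  calc ∫⁻ z in T, (‖z‖₊ : ℝ≥0∞) ^ s
      = ENNReal.ofReal (R ^ n) * ((ENNReal.ofReal (R ^ n))⁻¹ * ∫⁻ z in T, (‖z‖₊ : ℝ≥0∞) ^ s) := by
        rw [← mul_assoc, ENNReal.mul_inv_cancel hRn0 ENNReal.ofReal_ne_top, one_mul]
    _ = ENNReal.ofReal (R ^ n) * (ENNReal.ofReal R ^ s * ∫⁻ z in S, (‖z‖₊ : ℝ≥0∞) ^ s) := by
        rw [← key]
    _ = _ := by rw [mul_assoc]

lemma shell_sum_lt_top {U : ℕ → Set E} {S : Set E} (hsub : S ⊆ ⋃ k, U k)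
    {c : ℝ≥0∞} (hc : c ≠ ∞) {r : ℝ≥0∞} (hr : r < 1) (s : ℝ)
    (hU : ∀ k, ∫⁻ z in U k, (‖z‖₊ : ℝ≥0∞) ^ s ≤ c * r ^ k) :
    ∫⁻ z in S, (‖z‖₊ : ℝ≥0∞) ^ s < ∞ :=
  calc ∫⁻ z in S, (‖z‖₊ : ℝ≥0∞) ^ s ≤ ∫⁻ z in ⋃ k, U k, (‖z‖₊ : ℝ≥0∞) ^ s :=
        lintegral_mono_set hsub
    _ ≤ ∑' k, ∫⁻ z in U k, (‖z‖₊ : ℝ≥0∞) ^ s := lintegral_iUnion_le _ _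
    _ ≤ ∑' k, c * r ^ k := ENNReal.tsum_le_tsum hU
    _ = c * (1 - r)⁻¹ := by rw [ENNReal.tsum_mul_left, ENNReal.tsum_geometric]
    _ < ∞ := ENNReal.mul_lt_top hc.lt_top (ENNReal.inv_lt_top.2 (tsub_pos_iff_lt.2 hr))

lemma shell_integral_le' {a b : ℝ} (ha : 0 < a) (s : ℝ) (hs : s ≤ 0) :
    ∫⁻ z in ball (0 : E) b \ ball (0 : E) a, (‖z‖₊ : ℝ≥0∞) ^ s
      ≤ ENNReal.ofReal (a ^ s) * volume (ball (0 : E) b) := by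
  calc ∫⁻ z in ball (0 : E) b \ ball (0 : E) a, (‖z‖₊ : ℝ≥0∞) ^ s
      ≤ ∫⁻ _ in ball (0 : E) b \ ball (0 : E) a, ENNReal.ofReal (a ^ s) := by
        refine setLIntegral_mono measurable_const (fun z hz => ?_)
        have hza : a ≤ ‖z‖ := by
          have := hz.2
          simpa [mem_ball, dist_zero_right, not_lt] using this
        have hzpos : (0:ℝ) < ‖z‖ := lt_of_lt_of_le ha hza
        rw [← enorm_eq_nnnorm, ← ofReal_norm, ENNReal.ofReal_rpow_of_pos hzpos]
        exact ENNReal.ofReal_le_ofReal (Real.rpow_le_rpow_of_nonpos ha hza hs)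
      _ = ENNReal.ofReal (a ^ s) * volume (ball (0 : E) b \ ball (0 : E) a) := by
        rw [setLIntegral_const]
      _ ≤ ENNReal.ofReal (a ^ s) * volume (ball (0 : E) b) :=
        mul_le_mul_right (measure_mono Set.diff_subset) _

lemma c2_lt_top (hn : 0 < n) {t : ℝ} (ht : (n : ℝ) < t) :
    ∫⁻ z in (ball (0 : E) 1)ᶜ, (‖z‖₊ : ℝ≥0∞) ^ (-t) < ∞ := by
  haveI : Nonempty (Fin n) := ⟨⟨0, hn⟩⟩
  have htpos : 0 < t := lt_of_le_of_lt (Nat.cast_nonneg n) ht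
  set U : ℕ → Set E := fun k => ball 0 (2 ^ (k + 1)) \ ball 0 (2 ^ k) with hUdef
  have hsub : (ball (0 : E) 1)ᶜ ⊆ ⋃ k, U k := by
    intro z hz
    have h1 : (1 : ℝ) ≤ ‖z‖ := by
      simpa [mem_ball, dist_zero_right, not_lt] using hz
    have hex : ∃ k : ℕ, ‖z‖ < 2 ^ (k + 1) := by
      obtain ⟨m, hm⟩ := pow_unbounded_of_one_lt ‖z‖ (by norm_num : (1 : ℝ) < 2)
      exact ⟨m, lt_of_lt_of_le hm (pow_le_pow_right₀ (by norm_num) (Nat.le_succ m))⟩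
    refine Set.mem_iUnion.2 ⟨Nat.find hex, mem_ball_zero_iff.2 (Nat.find_spec hex), ?_⟩
    intro hzk
    rw [mem_ball_zero_iff] at hzk
    rcases Nat.eq_zero_or_pos (Nat.find hex) with h0 | hpos
    · rw [h0] at hzk; norm_num at hzk; linarith
    · obtain ⟨j, hj⟩ := Nat.exists_eq_succ_of_ne_zero hpos.ne'
      exact Nat.find_min hex (by omega : j < Nat.find hex) (by rw [hj] at hzk; exact hzk)
  have hU : ∀ k, ∫⁻ z in U k, (‖z‖₊ : ℝ≥0∞) ^ (-t)
      ≤ (ENNReal.ofReal ((2:ℝ) ^ (n:ℝ)) * volume (ball (0 : E) 1)) *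
        ENNReal.ofReal ((2:ℝ) ^ ((n:ℝ) - t)) ^ k := by
    intro k
    have step1 := shell_integral_le' (n := n) (a := (2:ℝ) ^ k) (b := (2:ℝ) ^ (k+1))
      (by positivity) (-t) (by linarith)
    have hball : volume (ball (0 : E) ((2:ℝ) ^ (k+1)))
        = ENNReal.ofReal (((2:ℝ) ^ (k+1)) ^ n) * volume (ball (0 : E) 1) := by
      rw [Measure.addHaar_ball volume _ (by positivity : (0:ℝ) ≤ 2 ^ (k+1)),
        finrank_euclideanSpace_fin]
    rw [hball] at step1
    refine step1.trans (le_of_eq ?_)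
    rw [← mul_assoc, ← ENNReal.ofReal_mul (by positivity)]
    rw [mul_comm (ENNReal.ofReal ((2:ℝ) ^ (n:ℝ))) (volume (ball (0 : E) 1)), mul_assoc,
      ← ENNReal.ofReal_pow (by positivity), ← ENNReal.ofReal_mul (by positivity),
      mul_comm (volume (ball (0 : E) 1))]
    congr 2
    have h2 : (0:ℝ) < 2 := two_pos
    rw [show ((2:ℝ)^(k+1))^n = (2:ℝ)^((k+1)*n : ℕ) from by rw [pow_mul],
      show ((2:ℝ)^k)^(-t) = (2:ℝ)^((k:ℝ)*(-t)) from by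
        rw [← Real.rpow_natCast (2:ℝ) k, ← Real.rpow_mul h2.le],
      show ((2:ℝ)^((n:ℝ)-t))^k = (2:ℝ)^(((n:ℝ)-t)*(k:ℝ)) from by
        rw [← Real.rpow_natCast ((2:ℝ)^((n:ℝ)-t)) k, ← Real.rpow_mul h2.le],
      ← Real.rpow_natCast (2:ℝ) ((k+1)*n),
      ← Real.rpow_add h2, ← Real.rpow_add h2]
    congr 1
    push_cast
    ring
  have hr : ENNReal.ofReal ((2:ℝ) ^ ((n:ℝ) - t)) < 1 := by
    rw [← ENNReal.ofReal_one]
    exact ENNReal.ofReal_lt_ofReal_iff_of_nonneg (by positivity) |>.2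
      (Real.rpow_lt_one_of_one_lt_of_neg (by norm_num) (by linarith))
  exact shell_sum_lt_top hsub
    (ENNReal.mul_ne_top ENNReal.ofReal_ne_top measure_ball_lt_top.ne) hr (-t) hU

lemma c1_lt_top (hn : 0 < n) {s : ℝ} (hs : -(n : ℝ) < s) :
    ∫⁻ z in ball (0 : E) 1, (‖z‖₊ : ℝ≥0∞) ^ s < ∞ := by
  haveI : Nonempty (Fin n) := ⟨⟨0, hn⟩⟩
  rcases le_or_gt 0 s with hs0 | hs0
  · calc ∫⁻ z in ball (0 : E) 1, (‖z‖₊ : ℝ≥0∞) ^ s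
        ≤ ∫⁻ _ in ball (0 : E) 1, 1 := by
          refine setLIntegral_mono measurable_const (fun z hz => ?_)
          have h1 : (‖z‖₊ : ℝ≥0∞) ≤ 1 := by
            rw [mem_ball_zero_iff] at hz
            exact_mod_cast ENNReal.coe_le_one_iff.2 (by exact_mod_cast hz.le)
          calc (‖z‖₊ : ℝ≥0∞) ^ s ≤ (1 : ℝ≥0∞) ^ s := ENNReal.rpow_le_rpow h1 hs0
            _ = 1 := ENNReal.one_rpow s
      _ = volume (ball (0 : E) 1) := by rw [setLIntegral_const, one_mul]
      _ < ∞ := measure_ball_lt_top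
  · set b : ℝ := (2:ℝ)⁻¹ with hbdef
    have hb0 : (0:ℝ) < b := by norm_num
    have hb1 : b < 1 := by norm_num
    set U : ℕ → Set E := fun k => ball 0 (b ^ k) \ ball 0 (b ^ (k + 1)) with hUdef
    have hsub : ball (0 : E) 1 ⊆ {(0 : E)} ∪ ⋃ k, U k := by
      intro z hz
      rcases eq_or_ne z 0 with rfl | hz0
      · exact Set.mem_union_left _ rfl
      refine Set.mem_union_right _ ?_
      have hzpos : (0:ℝ) < ‖z‖ := norm_pos_iff.2 hz0
      have hz1 : ‖z‖ < 1 := mem_ball_zero_iff.1 hz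
      have hex : ∃ k : ℕ, b ^ (k + 1) ≤ ‖z‖ := by
        obtain ⟨m, hm⟩ := exists_pow_lt_of_lt_one hzpos hb1
        exact ⟨m, le_trans (pow_le_pow_of_le_one hb0.le hb1.le (Nat.le_succ m)) hm.le⟩
      refine Set.mem_iUnion.2 ⟨Nat.find hex, ?_, ?_⟩
      · rw [mem_ball_zero_iff]
        rcases Nat.eq_zero_or_pos (Nat.find hex) with h0 | hpos
        · rw [h0]; simpa using hz1
        · obtain ⟨j, hj⟩ := Nat.exists_eq_succ_of_ne_zero hpos.ne'
          have hmin := Nat.find_min hex (by omega : j < Nat.find hex)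
          rw [hj]
          exact lt_of_not_ge (by simpa [Nat.succ_eq_add_one] using hmin)
      · intro hmem
        rw [mem_ball_zero_iff] at hmem
        exact absurd (Nat.find_spec hex) (not_le.2 hmem)
    have hU : ∀ k, ∫⁻ z in U k, (‖z‖₊ : ℝ≥0∞) ^ s
        ≤ (ENNReal.ofReal (b ^ s) * volume (ball (0 : E) 1)) *
          ENNReal.ofReal (b ^ ((n:ℝ) + s)) ^ k := by
      intro k
      have step1 := shell_integral_le' (n := n) (a := b ^ (k+1)) (b := b ^ k)
        (by positivity) s hs0.le
      have hball : volume (ball (0 : E) (b ^ k))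
          = ENNReal.ofReal ((b ^ k) ^ n) * volume (ball (0 : E) 1) := by
        rw [Measure.addHaar_ball volume _ (by positivity : (0:ℝ) ≤ b ^ k),
          finrank_euclideanSpace_fin]
      rw [hball] at step1
      refine step1.trans (le_of_eq ?_)
      rw [← mul_assoc, ← ENNReal.ofReal_mul (by positivity)]
      rw [mul_comm (ENNReal.ofReal (b ^ s)) (volume (ball (0 : E) 1)), mul_assoc,
        ← ENNReal.ofReal_pow (by positivity), ← ENNReal.ofReal_mul (by positivity),
        mul_comm (volume (ball (0 : E) 1))]
      congr 2
      rw [show (b^k)^n = b^(k*n : ℕ) from by rw [pow_mul],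
        show (b^(k+1))^s = b^(((k:ℝ)+1)*s) from by
          rw [← Real.rpow_natCast b (k+1), ← Real.rpow_mul hb0.le]; push_cast; ring_nf,
        show (b^((n:ℝ)+s))^k = b^(((n:ℝ)+s)*(k:ℝ)) from by
          rw [← Real.rpow_natCast (b^((n:ℝ)+s)) k, ← Real.rpow_mul hb0.le],
        ← Real.rpow_natCast b (k*n),
        ← Real.rpow_add hb0, ← Real.rpow_add hb0]
      congr 1
      push_cast
      ring
    have hr : ENNReal.ofReal (b ^ ((n:ℝ) + s)) < 1 := by
      rw [← ENNReal.ofReal_one]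
      refine ENNReal.ofReal_lt_ofReal_iff_of_nonneg (by positivity) |>.2 ?_
      exact Real.rpow_lt_one hb0.le hb1 (by linarith)
    calc ∫⁻ z in ball (0 : E) 1, (‖z‖₊ : ℝ≥0∞) ^ s
        ≤ ∫⁻ z in {(0 : E)} ∪ ⋃ k, U k, (‖z‖₊ : ℝ≥0∞) ^ s := lintegral_mono_set hsub
      _ ≤ (∫⁻ z in {(0 : E)}, (‖z‖₊ : ℝ≥0∞) ^ s) + ∫⁻ z in ⋃ k, U k, (‖z‖₊ : ℝ≥0∞) ^ s :=
          lintegral_union_le _ _ _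
      _ < ∞ := by
          have h0 : (∫⁻ z in {(0 : E)}, (‖z‖₊ : ℝ≥0∞) ^ s) = 0 := by
            rw [Measure.restrict_eq_zero.2 (measure_singleton 0), lintegral_zero_measure]
          rw [h0, zero_add]
          exact shell_sum_lt_top (Set.Subset.refl _)
            (ENNReal.mul_ne_top ENNReal.ofReal_ne_top measure_ball_lt_top.ne) hr s hU

lemma rpow_div_rpow_le {x : ℝ≥0∞} (hx : x ≠ ⊤) {a : ℝ} (ha : 0 < a) (b : ℝ) :
    x ^ a / x ^ b ≤ x ^ (a - b) := by
  rcases eq_or_ne x 0 with rfl | hx0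
  · simp [ENNReal.zero_rpow_of_pos ha, ENNReal.zero_div]
  · rw [sub_eq_add_neg, ENNReal.rpow_add _ _ hx0 hx, ENNReal.rpow_neg, div_eq_mul_inv]

lemma maximal_ball_le (g : E → ℝ) (x : E) {r : ℝ} (hr : 0 < r) :
    ∫⁻ y in ball x r, (‖g y‖₊ : ℝ≥0∞) ≤ volume (ball x r) * maximal n g x := by
  have h : (volume (ball x r))⁻¹ * ∫⁻ y in ball x r, (‖g y‖₊ : ℝ≥0∞) ≤ maximal n g x :=
    le_iSup₂ (f := fun (r : ℝ) (_ : 0 < r) =>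
      (volume (ball x r))⁻¹ * ∫⁻ y in ball x r, (‖g y‖₊ : ℝ≥0∞)) r hr
  calc ∫⁻ y in ball x r, (‖g y‖₊ : ℝ≥0∞)
      = volume (ball x r) * ((volume (ball x r))⁻¹ * ∫⁻ y in ball x r, (‖g y‖₊ : ℝ≥0∞)) := by
        rw [← mul_assoc, ENNReal.mul_inv_cancel (measure_ball_pos volume x hr).ne'
          measure_ball_lt_top.ne, one_mul]
    _ ≤ _ := mul_le_mul_right h _

lemma nnnorm_le_maximal {f : E → ℝ} (hf : Continuous f) (x : E) :
    (‖f x‖₊ : ℝ≥0∞) ≤ maximal n f x := by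
  refine ENNReal.le_of_forall_pos_le_add fun ε hε _ => ?_
  obtain ⟨δ, hδ, hcont⟩ := Metric.continuousAt_iff.1 hf.continuousAt (ε : ℝ) hε
  have hv0 : volume (ball x δ) ≠ 0 := (measure_ball_pos volume x hδ).ne'
  have hvt : volume (ball x δ) ≠ ∞ := measure_ball_lt_top.ne
  have hlow : ∀ y ∈ ball x δ, ENNReal.ofReal (‖f x‖ - ε) ≤ (‖f y‖₊ : ℝ≥0∞) := by
    intro y hy
    rw [← enorm_eq_nnnorm, ← ofReal_norm]
    refine ENNReal.ofReal_le_ofReal ?_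
    have h1 : |f y - f x| < (ε : ℝ) := by
      have := hcont (mem_ball.1 hy)
      simpa [Real.dist_eq] using this
    have h2 : |f x| - |f y| ≤ |f x - f y| := abs_sub_abs_le_abs_sub _ _
    rw [abs_sub_comm] at h1
    simp only [Real.norm_eq_abs]
    linarith
  have key : ENNReal.ofReal (‖f x‖ - ε) ≤ maximal n f x := by
    refine le_trans ?_ (le_iSup₂ (f := fun (r : ℝ) (_ : 0 < r) =>
      (volume (ball x r))⁻¹ * ∫⁻ y in ball x r, (‖f y‖₊ : ℝ≥0∞)) δ hδ)
    calc ENNReal.ofReal (‖f x‖ - ε)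
        = (volume (ball x δ))⁻¹ * (volume (ball x δ) * ENNReal.ofReal (‖f x‖ - ε)) := by
          rw [← mul_assoc, ENNReal.inv_mul_cancel hv0 hvt, one_mul]
      _ ≤ (volume (ball x δ))⁻¹ * ∫⁻ y in ball x δ, (‖f y‖₊ : ℝ≥0∞) := by
          refine mul_le_mul_right ?_ _
          rw [mul_comm, ← setLIntegral_const]
          exact setLIntegral_mono (measurable_nnnorm.comp hf.measurable).coe_nnreal_ennreal hlow
  calc (‖f x‖₊ : ℝ≥0∞) = ENNReal.ofReal ‖f x‖ := (ofReal_norm _).symm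
    _ ≤ ENNReal.ofReal (‖f x‖ - ε) + ENNReal.ofReal (ε : ℝ) := by
        calc ENNReal.ofReal ‖f x‖ = ENNReal.ofReal ((‖f x‖ - ε) + ε) := by ring_nf
          _ ≤ _ := ENNReal.ofReal_add_le
    _ ≤ maximal n f x + ε := by
        rw [ENNReal.ofReal_coe_nnreal]
        exact add_le_add key le_rfl

lemma my_translate (h : E → ℝ≥0∞) (x : E) (r : ℝ) :
    ∫⁻ y in ball (0 : E) r, h (x + y) = ∫⁻ w in ball x r, h w := by
  have hmp : MeasurePreserving (fun y : E => x + y) volume volume :=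
    measurePreserving_add_left volume x
  have hemb : MeasurableEmbedding (fun y : E => x + y) :=
    (MeasurableEquiv.addLeft x).measurableEmbedding
  have hpre : (fun y : E => x + y) ⁻¹' ball x r = ball (0 : E) r := by
    ext y; simp [mem_ball, dist_eq_norm]
  rw [← hpre, hmp.setLIntegral_comp_preimage_emb hemb]

lemma avgDiff_le_two_maximal {f : E → ℝ} (hf : Continuous f) (x z : E) :
    avgDiff n f x z ≤ 2 * maximal n f x := by
  rcases eq_or_ne z 0 with rfl | hz0
  · rw [avgDiff]
    simp
  have hz0' : 0 < ‖z‖ := norm_pos_iff.2 hz0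
  have hr : 0 < 2 * ‖z‖ := by positivity
  set r := 2 * ‖z‖
  have hv0 : volume (ball (0 : E) r) ≠ 0 := (measure_ball_pos volume _ hr).ne'
  have hvt : volume (ball (0 : E) r) ≠ ∞ := measure_ball_lt_top.ne
  have hvx : volume (ball x r) = volume (ball (0 : E) r) := by
    rw [Measure.addHaar_ball_center]
  have hstep : ∫⁻ y in ball (0 : E) r, (‖f x - f (x + y)‖₊ : ℝ≥0∞)
      ≤ volume (ball (0 : E) r) * ((‖f x‖₊ : ℝ≥0∞) + maximal n f x) := by
    calc ∫⁻ y in ball (0 : E) r, (‖f x - f (x + y)‖₊ : ℝ≥0∞)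
        ≤ ∫⁻ y in ball (0 : E) r, ((‖f x‖₊ : ℝ≥0∞) + (‖f (x + y)‖₊ : ℝ≥0∞)) := by
          refine lintegral_mono fun y => ?_
          simpa [ENNReal.coe_add] using ENNReal.coe_le_coe.2 (nnnorm_sub_le (f x) (f (x + y)))
      _ = (∫⁻ _ in ball (0 : E) r, (‖f x‖₊ : ℝ≥0∞)) +
            ∫⁻ y in ball (0 : E) r, (‖f (x + y)‖₊ : ℝ≥0∞) :=
          lintegral_add_left measurable_const _
      _ ≤ volume (ball (0 : E) r) * (‖f x‖₊ : ℝ≥0∞) +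
            volume (ball (0 : E) r) * maximal n f x := by
          refine add_le_add (le_of_eq (by rw [setLIntegral_const, mul_comm])) ?_
          rw [my_translate (fun w => (‖f w‖₊ : ℝ≥0∞)) x r, ← hvx]
          exact maximal_ball_le f x hr
      _ = volume (ball (0 : E) r) * ((‖f x‖₊ : ℝ≥0∞) + maximal n f x) := by rw [mul_add]
  calc avgDiff n f x z
      ≤ (volume (ball (0 : E) r))⁻¹ *
          (volume (ball (0 : E) r) * ((‖f x‖₊ : ℝ≥0∞) + maximal n f x)) :=
        mul_le_mul_right hstep _
    _ = (‖f x‖₊ : ℝ≥0∞) + maximal n f x := by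
        rw [← mul_assoc, ENNReal.inv_mul_cancel hv0 hvt, one_mul]
    _ ≤ maximal n f x + maximal n f x := add_le_add (nnnorm_le_maximal hf x) le_rfl
    _ = 2 * maximal n f x := (two_mul _).symm

lemma ftc_bound {f : E → ℝ} (hf : ContDiff ℝ 1 f) (x y : E) :
    (‖f x - f (x + y)‖₊ : ℝ≥0∞) ≤ ENNReal.ofReal ‖y‖ *
      ∫⁻ t in Set.Ioc (0:ℝ) 1, ENNReal.ofReal (‖fderiv ℝ f (x + t • y)‖) := by
  set gr : E → ℝ := fun w => ‖fderiv ℝ f w‖ with hgrdef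
  have hgr : Continuous gr := (hf.continuous_fderiv one_ne_zero).norm
  have hφ : ∀ t : ℝ, HasDerivAt (fun t : ℝ => f (x + t • y)) ((fderiv ℝ f (x + t • y)) y) t := by
    intro t
    have h1 : HasDerivAt (fun t : ℝ => x + t • y) y t := by
      simpa using ((hasDerivAt_id t).smul_const y).const_add x
    exact ((hf.differentiable one_ne_zero) _).hasFDerivAt.comp_hasDerivAt t h1
  have hDcont : Continuous fun t : ℝ => (fderiv ℝ f (x + t • y)) y := by
    have : Continuous fun t : ℝ => fderiv ℝ f (x + t • y) :=
      (hf.continuous_fderiv one_ne_zero).comp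
        (continuous_const.add (continuous_id.smul continuous_const))
    exact this.clm_apply continuous_const
  have hint : f (x + y) - f x = ∫ t in (0:ℝ)..1, (fderiv ℝ f (x + t • y)) y := by
    have h := intervalIntegral.integral_eq_sub_of_hasDerivAt
      (a := (0:ℝ)) (b := (1:ℝ)) (f := fun t : ℝ => f (x + t • y)) (fun t _ => hφ t)
      (hDcont.intervalIntegrable _ _)
    rw [h]
    norm_num
  have hgcont : Continuous fun t : ℝ => gr (x + t • y) * ‖y‖ :=
    ((hgr.comp (continuous_const.add (continuous_id.smul continuous_const))).mul
      continuous_const)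
  have hreal : ‖f x - f (x + y)‖ ≤ ∫ t in (0:ℝ)..1, gr (x + t • y) * ‖y‖ := by
    rw [norm_sub_rev, hint]
    calc ‖∫ t in (0:ℝ)..1, (fderiv ℝ f (x + t • y)) y‖
        ≤ ∫ t in (0:ℝ)..1, ‖(fderiv ℝ f (x + t • y)) y‖ :=
          intervalIntegral.norm_integral_le_integral_norm zero_le_one
      _ ≤ ∫ t in (0:ℝ)..1, gr (x + t • y) * ‖y‖ := by
          refine intervalIntegral.integral_mono_on zero_le_one
            (hDcont.norm.intervalIntegrable _ _) (hgcont.intervalIntegrable _ _) ?_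
          intro t _
          exact ContinuousLinearMap.le_opNorm _ y
  have hgnn : ∀ t : ℝ, 0 ≤ gr (x + t • y) := fun t => norm_nonneg _
  show (‖f x - f (x + y)‖₊ : ℝ≥0∞) ≤ ENNReal.ofReal ‖y‖ *
    ∫⁻ t : ℝ in Set.Ioc (0:ℝ) 1, ENNReal.ofReal (gr (x + t • y))
  calc (‖f x - f (x + y)‖₊ : ℝ≥0∞) = ENNReal.ofReal ‖f x - f (x + y)‖ :=
        (ofReal_norm _).symm
    _ ≤ ENNReal.ofReal (∫ t in (0:ℝ)..1, gr (x + t • y) * ‖y‖) := ENNReal.ofReal_le_ofReal hreal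
    _ = ENNReal.ofReal ((∫ t in Set.Ioc (0:ℝ) 1, gr (x + t • y)) * ‖y‖) := by
        rw [intervalIntegral.integral_of_le zero_le_one, ← integral_mul_const]
    _ = ENNReal.ofReal ‖y‖ * ENNReal.ofReal (∫ t in Set.Ioc (0:ℝ) 1, gr (x + t • y)) := by
        rw [mul_comm, ENNReal.ofReal_mul (norm_nonneg y)]
    _ = ENNReal.ofReal ‖y‖ * ∫⁻ t in Set.Ioc (0:ℝ) 1, ENNReal.ofReal (gr (x + t • y)) := by
        congr 1
        have hc : Continuous fun t : ℝ => gr (x + t • y) :=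
          hgr.comp (continuous_const.add (continuous_id.smul continuous_const))
        exact ofReal_integral_eq_lintegral_ofReal hc.integrableOn_Ioc
          (Filter.Eventually.of_forall fun t => hgnn t)

lemma grad_inner (hn : 0 < n) {gr : E → ℝ} (hgr : Continuous gr) (hnn : ∀ w, 0 ≤ gr w)
    (x : E) {r t : ℝ} (hr : 0 < r) (ht : t ∈ Set.Ioc (0:ℝ) 1) :
    ∫⁻ y in ball (0 : E) r, ENNReal.ofReal (gr (x + t • y))
      ≤ volume (ball (0 : E) r) * maximal n gr x := by
  haveI : Nonempty (Fin n) := ⟨⟨0, hn⟩⟩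
  have ht0 : 0 < t := ht.1
  have hrt : 0 < r * t := mul_pos hr ht0
  set F : E → ℝ≥0∞ :=
    fun u => (ball (0:E) (r*t)).indicator (fun u => ENNReal.ofReal (gr (x + u))) u with hFdef
  have hgc : Continuous fun u : E => ENNReal.ofReal (gr (x + u)) :=
    ENNReal.continuous_ofReal.comp (hgr.comp (continuous_const.add continuous_id))
  have hFmeas : Measurable F := hgc.measurable.indicator measurableSet_ball
  have key := my_lintegral_comp_smul hFmeas ht0.ne'
  have hpt : ∀ y : E, F (t • y)
      = (ball (0:E) r).indicator (fun y => ENNReal.ofReal (gr (x + t • y))) y := by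
    intro y
    have hmem : t • y ∈ ball (0:E) (r*t) ↔ y ∈ ball (0:E) r := by
      rw [mem_ball_zero_iff, mem_ball_zero_iff, norm_smul, Real.norm_eq_abs, abs_of_pos ht0,
        mul_comm r t]
      exact mul_lt_mul_iff_right₀ ht0
    by_cases hy : y ∈ ball (0:E) r
    · rw [hFdef]
      simp only []
      rw [Set.indicator_of_mem (hmem.2 hy), Set.indicator_of_mem hy]
    · rw [hFdef]
      simp only []
      rw [Set.indicator_of_notMem (fun h => hy (hmem.1 h)), Set.indicator_of_notMem hy]
  rw [lintegral_congr hpt, lintegral_indicator measurableSet_ball] at key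
  have hFint : ∫⁻ z, F z = ∫⁻ u in ball (0:E) (r*t), ENNReal.ofReal (gr (x + u)) :=
    lintegral_indicator measurableSet_ball _
  have htrans : ∫⁻ u in ball (0:E) (r*t), ENNReal.ofReal (gr (x + u))
      = ∫⁻ w in ball x (r*t), ENNReal.ofReal (gr w) :=
    my_translate (fun w => ENNReal.ofReal (gr w)) x (r*t)
  have hofr : ∀ w, ENNReal.ofReal (gr w) = (‖gr w‖₊ : ℝ≥0∞) := by
    intro w
    rw [← enorm_eq_nnnorm, ← ofReal_norm, Real.norm_eq_abs, abs_of_nonneg (hnn w)]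
  have hmax : ∫⁻ w in ball x (r*t), ENNReal.ofReal (gr w)
      ≤ volume (ball x (r*t)) * maximal n gr x := by
    rw [lintegral_congr fun w => hofr w]
    exact maximal_ball_le gr x hrt
  have hball1 : volume (ball x (r*t)) = ENNReal.ofReal ((r*t) ^ n) * volume (ball (0:E) 1) := by
    rw [Measure.addHaar_ball volume _ hrt.le, finrank_euclideanSpace_fin]
  have hball2 : volume (ball (0:E) r) = ENNReal.ofReal (r ^ n) * volume (ball (0:E) 1) := by
    rw [Measure.addHaar_ball volume _ hr.le, finrank_euclideanSpace_fin]
  calc ∫⁻ y in ball (0 : E) r, ENNReal.ofReal (gr (x + t • y))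
      = ENNReal.ofReal |((t ^ n : ℝ))⁻¹| * ∫⁻ z, F z := key
    _ ≤ ENNReal.ofReal ((t ^ n : ℝ))⁻¹ * (volume (ball x (r*t)) * maximal n gr x) := by
        rw [abs_of_pos (by positivity), hFint, htrans]
        exact mul_le_mul_right hmax _
    _ = (ENNReal.ofReal ((t ^ n : ℝ))⁻¹ * ENNReal.ofReal ((r*t) ^ n)) *
          volume (ball (0:E) 1) * maximal n gr x := by
        rw [hball1]; ring
    _ = ENNReal.ofReal (r ^ n) * volume (ball (0:E) 1) * maximal n gr x := by
        rw [← ENNReal.ofReal_mul (by positivity)]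
        congr 3
        field_simp
        ring
    _ = volume (ball (0 : E) r) * maximal n gr x := by rw [hball2]

lemma avgDiff_le_grad (hn : 0 < n) {f : E → ℝ} (hf : ContDiff ℝ 1 f) (x z : E) :
    avgDiff n f x z ≤ 2 * (‖z‖₊ : ℝ≥0∞) * maximal n (fun w => ‖fderiv ℝ f w‖) x := by
  rcases eq_or_ne z 0 with rfl | hz0
  · rw [avgDiff]; simp
  have hz0' : 0 < ‖z‖ := norm_pos_iff.2 hz0
  have hr : 0 < 2 * ‖z‖ := by positivity
  set r := 2 * ‖z‖ with hrdef
  set gr : E → ℝ := fun w => ‖fderiv ℝ f w‖ with hgrdef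
  have hgr : Continuous gr := (hf.continuous_fderiv one_ne_zero).norm
  have hnn : ∀ w, 0 ≤ gr w := fun w => norm_nonneg _
  set M := maximal n gr x with hMdef
  have hv0 : volume (ball (0 : E) r) ≠ 0 := (measure_ball_pos volume _ hr).ne'
  have hvt : volume (ball (0 : E) r) ≠ ∞ := measure_ball_lt_top.ne
  have hprodmeas : Measurable fun p : E × ℝ => ENNReal.ofReal (gr (x + p.2 • p.1)) := by
    exact (ENNReal.continuous_ofReal.comp
      (hgr.comp (continuous_const.add (continuous_snd.smul continuous_fst)))).measurable
  have hinner_meas : Measurable fun y : E =>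
      ∫⁻ t in Set.Ioc (0:ℝ) 1, ENNReal.ofReal (gr (x + t • y)) := by
    exact hprodmeas.lintegral_prod_right'
  have hstep : ∫⁻ y in ball (0 : E) r, (‖f x - f (x + y)‖₊ : ℝ≥0∞)
      ≤ ENNReal.ofReal r * (volume (ball (0 : E) r) * M) := by
    calc ∫⁻ y in ball (0 : E) r, (‖f x - f (x + y)‖₊ : ℝ≥0∞)
        ≤ ∫⁻ y in ball (0 : E) r,
            ENNReal.ofReal r * ∫⁻ t in Set.Ioc (0:ℝ) 1, ENNReal.ofReal (gr (x + t • y)) := by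
          refine setLIntegral_mono (measurable_const.mul hinner_meas) (fun y hy => ?_)
          refine le_trans (ftc_bound hf x y) (mul_le_mul_left ?_ _)
          exact ENNReal.ofReal_le_ofReal (mem_ball_zero_iff.1 hy).le
      _ = ENNReal.ofReal r * ∫⁻ y in ball (0 : E) r,
            ∫⁻ t in Set.Ioc (0:ℝ) 1, ENNReal.ofReal (gr (x + t • y)) :=
          lintegral_const_mul' _ _ ENNReal.ofReal_ne_top
      _ = ENNReal.ofReal r * ∫⁻ t in Set.Ioc (0:ℝ) 1,
            ∫⁻ y in ball (0 : E) r, ENNReal.ofReal (gr (x + t • y)) := by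
          congr 1
          exact lintegral_lintegral_swap (hprodmeas.aemeasurable)
      _ ≤ ENNReal.ofReal r * ∫⁻ _ in Set.Ioc (0:ℝ) 1, volume (ball (0 : E) r) * M := by
          refine mul_le_mul_right (setLIntegral_mono measurable_const (fun t ht => ?_)) _
          exact grad_inner hn hgr hnn x hr ht
      _ = ENNReal.ofReal r * (volume (ball (0 : E) r) * M) := by
          rw [setLIntegral_const, Real.volume_Ioc]
          norm_num
  calc avgDiff n f x z
      ≤ (volume (ball (0 : E) r))⁻¹ * (ENNReal.ofReal r * (volume (ball (0 : E) r) * M)) :=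
        mul_le_mul_right hstep _
    _ = ENNReal.ofReal r * M := by
        rw [mul_comm (ENNReal.ofReal r), mul_assoc, ← mul_assoc,
          ENNReal.inv_mul_cancel hv0 hvt, one_mul, mul_comm]
    _ = 2 * (‖z‖₊ : ℝ≥0∞) * M := by
        rw [hrdef, ENNReal.ofReal_mul (by norm_num), ofReal_norm, enorm_eq_nnnorm]
        norm_num

end

end Stmt13Aux

/-- Pointwise estimate of the averaged Gagliardo integrand by
`M(f)(x)^{(1-α₁)p₁} M(|Df|)(x)^{α₁p₁}`. -/

theorem stmt13 (n : ℕ) (α₁ p₁ : ℝ) (hα₁ : 0 < α₁) (hα₁' : α₁ < 1) (hp₁ : 1 ≤ p₁) :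
    ∃ C : ℝ≥0∞, 0 < C ∧ C < ∞ ∧
      ∀ f : EuclideanSpace ℝ (Fin n) → ℝ, ContDiff ℝ 1 f →
        ∀ x, (∫⁻ z, avgDiff n f x z ^ p₁ /
            (‖z‖₊ : ℝ≥0∞) ^ ((n:ℝ) + α₁ * p₁)) ≤
          C * maximal n f x ^ ((1 - α₁) * p₁) *
            maximal n (fun y => ‖fderiv ℝ f y‖) x ^ (α₁ * p₁) := by
  classical
  open Stmt13Aux in
  have hp0 : (0:ℝ) < p₁ := lt_of_lt_of_le one_pos hp₁
  rcases Nat.eq_zero_or_pos n with rfl | hn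
  · -- dimension 0 : the left-hand side vanishes
    refine ⟨1, one_pos, ENNReal.one_lt_top, fun f hf x => ?_⟩
    have hz : ∀ z : EuclideanSpace ℝ (Fin 0),
        avgDiff 0 f x z ^ p₁ / (‖z‖₊ : ℝ≥0∞) ^ (((0:ℕ):ℝ) + α₁ * p₁) = 0 := by
      intro z
      have hz0 : z = 0 := Subsingleton.elim z 0
      have h0 : avgDiff 0 f x z = 0 := by
        rw [avgDiff, hz0]
        simp
      rw [h0, ENNReal.zero_rpow_of_pos hp0, ENNReal.zero_div]
    rw [lintegral_congr hz, lintegral_zero]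
    exact zero_le
  · -- positive dimension
    set e₁ : ℝ := p₁ - ((n:ℝ) + α₁ * p₁) with he₁
    have he₁gt : -(n:ℝ) < e₁ := by
      have : 0 < (1 - α₁) * p₁ := mul_pos (by linarith) hp0
      rw [he₁]; nlinarith
    have hntlt : (n:ℝ) < (n:ℝ) + α₁ * p₁ := by nlinarith [mul_pos hα₁ hp0]
    set c₁ : ℝ≥0∞ := ∫⁻ z in Metric.ball (0 : EuclideanSpace ℝ (Fin n)) 1,
      (‖z‖₊ : ℝ≥0∞) ^ e₁ with hc₁def
    set c₂ : ℝ≥0∞ := ∫⁻ z in (Metric.ball (0 : EuclideanSpace ℝ (Fin n)) 1)ᶜ,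
      (‖z‖₊ : ℝ≥0∞) ^ (-((n:ℝ) + α₁ * p₁)) with hc₂def
    have hc₁ : c₁ < ∞ := c1_lt_top hn he₁gt
    have hc₂ : c₂ < ∞ := c2_lt_top hn hntlt
    have h2p : ((2:ℝ≥0∞) ^ p₁) ≠ ∞ :=
      my_rpow_ne_top (by norm_num) (by norm_num) p₁
    refine ⟨(2:ℝ≥0∞) ^ p₁ * (c₁ + c₂) + 1, ?_, ?_, ?_⟩
    · exact lt_of_lt_of_le one_pos le_add_self
    · refine (ENNReal.add_lt_top).2 ⟨ENNReal.mul_lt_top h2p.lt_top ?_, ENNReal.one_lt_top⟩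
      exact ENNReal.add_lt_top.2 ⟨hc₁, hc₂⟩
    intro f hf x
    set gr : EuclideanSpace ℝ (Fin n) → ℝ := fun y => ‖fderiv ℝ f y‖ with hgrdef
    set A := maximal n f x with hAdef
    set B := maximal n gr x with hBdef
    set q₁ : ℝ := (1 - α₁) * p₁ with hq₁def
    set q₂ : ℝ := α₁ * p₁ with hq₂def
    have hq₁pos : 0 < q₁ := mul_pos (by linarith) hp0
    have hq₂pos : 0 < q₂ := mul_pos hα₁ hp0
    show (∫⁻ z, avgDiff n f x z ^ p₁ / (‖z‖₊ : ℝ≥0∞) ^ ((n:ℝ) + α₁ * p₁)) ≤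
        ((2:ℝ≥0∞) ^ p₁ * (c₁ + c₂) + 1) * A ^ q₁ * B ^ q₂
    -- degenerate cases
    rcases eq_or_ne B 0 with hB0 | hB0
    · have hz : ∀ z, avgDiff n f x z ^ p₁ / (‖z‖₊ : ℝ≥0∞) ^ ((n:ℝ) + α₁ * p₁) = 0 := by
        intro z
        have h0 : avgDiff n f x z = 0 := by
          refine le_antisymm ?_ (zero_le)
          have := avgDiff_le_grad hn hf x z
          rw [← hgrdef, ← hBdef, hB0, mul_zero] at this
          exact this
        rw [h0, ENNReal.zero_rpow_of_pos hp0, ENNReal.zero_div]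
      rw [lintegral_congr hz, lintegral_zero]
      exact zero_le
    rcases eq_or_ne A 0 with hA0 | hA0
    · have hz : ∀ z, avgDiff n f x z ^ p₁ / (‖z‖₊ : ℝ≥0∞) ^ ((n:ℝ) + α₁ * p₁) = 0 := by
        intro z
        have h0 : avgDiff n f x z = 0 := by
          refine le_antisymm ?_ (zero_le)
          have := avgDiff_le_two_maximal (hf.continuous) x z
          rw [← hAdef, hA0, mul_zero] at this
          exact this
        rw [h0, ENNReal.zero_rpow_of_pos hp0, ENNReal.zero_div]
      rw [lintegral_congr hz, lintegral_zero]
      exact zero_le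
    have hC0 : ((2:ℝ≥0∞) ^ p₁ * (c₁ + c₂) + 1) ≠ 0 := by
      simp
    rcases eq_or_ne A ∞ with hAt | hAt
    · have : ((2:ℝ≥0∞) ^ p₁ * (c₁ + c₂) + 1) * A ^ q₁ * B ^ q₂ = ∞ := by
        rw [hAt, ENNReal.top_rpow_of_pos hq₁pos, ENNReal.mul_top hC0,
          ENNReal.top_mul (my_rpow_ne_zero hB0 hq₂pos)]
      rw [this]
      exact le_top
    rcases eq_or_ne B ∞ with hBt | hBt
    · have : ((2:ℝ≥0∞) ^ p₁ * (c₁ + c₂) + 1) * A ^ q₁ * B ^ q₂ = ∞ := by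
        rw [hBt, ENNReal.top_rpow_of_pos hq₂pos,
          ENNReal.mul_top (mul_ne_zero hC0 (my_rpow_ne_zero hA0 hq₁pos))]
      rw [this]
      exact le_top
    -- main case : 0 < A, B < ∞
    set ρ : ℝ≥0∞ := A / B with hρdef
    have hρ0 : ρ ≠ 0 := by
      rw [hρdef, div_eq_mul_inv]
      exact mul_ne_zero hA0 (ENNReal.inv_ne_zero.2 hBt)
    have hρt : ρ ≠ ∞ := (ENNReal.div_lt_top hAt hB0).ne
    set R : ℝ := ρ.toReal with hRdef
    have hR : 0 < R := ENNReal.toReal_pos hρ0 hρt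
    have hofR : ENNReal.ofReal R = ρ := ENNReal.ofReal_toReal hρt
    have hBp : (B : ℝ≥0∞) ^ p₁ ≠ ∞ := my_rpow_ne_top hB0 hBt p₁
    have hAp : (A : ℝ≥0∞) ^ p₁ ≠ ∞ := my_rpow_ne_top hA0 hAt p₁
    -- pointwise bounds
    have hpt1 : ∀ z : EuclideanSpace ℝ (Fin n),
        avgDiff n f x z ^ p₁ / (‖z‖₊ : ℝ≥0∞) ^ ((n:ℝ) + α₁ * p₁)
          ≤ (2:ℝ≥0∞) ^ p₁ * B ^ p₁ * (‖z‖₊ : ℝ≥0∞) ^ e₁ := by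
      intro z
      have h1 : avgDiff n f x z ^ p₁ ≤ ((2:ℝ≥0∞) * (‖z‖₊ : ℝ≥0∞) * B) ^ p₁ := by
        refine ENNReal.rpow_le_rpow ?_ hp0.le
        have := avgDiff_le_grad hn hf x z
        rw [← hgrdef, ← hBdef] at this
        exact this
      have h2 : ((2:ℝ≥0∞) * (‖z‖₊ : ℝ≥0∞) * B) ^ p₁
          = (2:ℝ≥0∞) ^ p₁ * (‖z‖₊ : ℝ≥0∞) ^ p₁ * B ^ p₁ := by
        rw [ENNReal.mul_rpow_of_ne_top (ENNReal.mul_ne_top (by norm_num) ENNReal.coe_ne_top) hBt,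
          ENNReal.mul_rpow_of_ne_top (by norm_num) ENNReal.coe_ne_top]
      calc avgDiff n f x z ^ p₁ / (‖z‖₊ : ℝ≥0∞) ^ ((n:ℝ) + α₁ * p₁)
          ≤ ((2:ℝ≥0∞) * (‖z‖₊ : ℝ≥0∞) * B) ^ p₁ / (‖z‖₊ : ℝ≥0∞) ^ ((n:ℝ) + α₁ * p₁) :=
            ENNReal.div_le_div_right h1 _
        _ = (2:ℝ≥0∞) ^ p₁ * B ^ p₁ *
              ((‖z‖₊ : ℝ≥0∞) ^ p₁ / (‖z‖₊ : ℝ≥0∞) ^ ((n:ℝ) + α₁ * p₁)) := by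
            rw [h2, mul_right_comm, mul_div_assoc]
        _ ≤ (2:ℝ≥0∞) ^ p₁ * B ^ p₁ * (‖z‖₊ : ℝ≥0∞) ^ e₁ :=
            mul_le_mul_right (rpow_div_rpow_le ENNReal.coe_ne_top hp0 _) _
    have hpt2 : ∀ z : EuclideanSpace ℝ (Fin n),
        avgDiff n f x z ^ p₁ / (‖z‖₊ : ℝ≥0∞) ^ ((n:ℝ) + α₁ * p₁)
          ≤ (2:ℝ≥0∞) ^ p₁ * A ^ p₁ * (‖z‖₊ : ℝ≥0∞) ^ (-((n:ℝ) + α₁ * p₁)) := by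
      intro z
      have h1 : avgDiff n f x z ^ p₁ ≤ ((2:ℝ≥0∞) * A) ^ p₁ := by
        refine ENNReal.rpow_le_rpow ?_ hp0.le
        have := avgDiff_le_two_maximal (hf.continuous) x z
        rw [← hAdef] at this
        exact this
      have h2 : ((2:ℝ≥0∞) * A) ^ p₁ = (2:ℝ≥0∞) ^ p₁ * A ^ p₁ := by
        rw [ENNReal.mul_rpow_of_ne_top (by norm_num) hAt]
      calc avgDiff n f x z ^ p₁ / (‖z‖₊ : ℝ≥0∞) ^ ((n:ℝ) + α₁ * p₁)
          ≤ ((2:ℝ≥0∞) * A) ^ p₁ / (‖z‖₊ : ℝ≥0∞) ^ ((n:ℝ) + α₁ * p₁) :=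
            ENNReal.div_le_div_right h1 _
        _ = (2:ℝ≥0∞) ^ p₁ * A ^ p₁ * (‖z‖₊ : ℝ≥0∞) ^ (-((n:ℝ) + α₁ * p₁)) := by
            rw [h2, div_eq_mul_inv, ENNReal.rpow_neg]
    -- scaling identities
    have hball : ∀ y : EuclideanSpace ℝ (Fin n),
        R • y ∈ Metric.ball (0 : EuclideanSpace ℝ (Fin n)) R ↔
          y ∈ Metric.ball (0 : EuclideanSpace ℝ (Fin n)) 1 := by
      intro y
      rw [mem_ball_zero_iff, mem_ball_zero_iff, norm_smul, Real.norm_eq_abs, abs_of_pos hR]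
      rw [mul_lt_iff_lt_one_right hR]
    have hcompl : ∀ y : EuclideanSpace ℝ (Fin n),
        R • y ∈ (Metric.ball (0 : EuclideanSpace ℝ (Fin n)) R)ᶜ ↔
          y ∈ (Metric.ball (0 : EuclideanSpace ℝ (Fin n)) 1)ᶜ := by
      intro y
      rw [Set.mem_compl_iff, Set.mem_compl_iff, not_iff_not]
      exact hball y
    have hofRn : ENNReal.ofReal (R ^ n) = ρ ^ (n:ℝ) := by
      rw [ENNReal.ofReal_pow hR.le, hofR, ← ENNReal.rpow_natCast]
    have hscale1 : ∫⁻ z in Metric.ball (0 : EuclideanSpace ℝ (Fin n)) R,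
        (‖z‖₊ : ℝ≥0∞) ^ e₁ = ρ ^ q₁ * c₁ := by
      rw [my_scale (Metric.ball (0 : EuclideanSpace ℝ (Fin n)) 1) _ measurableSet_ball hR e₁
        hball, hofRn, hofR, ← ENNReal.rpow_add _ _ hρ0 hρt, ← hc₁def]
      congr 2
      rw [he₁, hq₁def]; ring
    have hscale2 : ∫⁻ z in (Metric.ball (0 : EuclideanSpace ℝ (Fin n)) R)ᶜ,
        (‖z‖₊ : ℝ≥0∞) ^ (-((n:ℝ) + α₁ * p₁)) = ρ ^ (-q₂) * c₂ := by
      rw [my_scale ((Metric.ball (0 : EuclideanSpace ℝ (Fin n)) 1)ᶜ) _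
        measurableSet_ball.compl hR _ hcompl, hofRn, hofR,
        ← ENNReal.rpow_add _ _ hρ0 hρt, ← hc₂def]
      congr 2
      rw [hq₂def]; ring
    -- power algebra
    have halg1 : B ^ p₁ * ρ ^ q₁ = A ^ q₁ * B ^ q₂ := by
      have hBsplit : B ^ p₁ = B ^ q₂ * B ^ q₁ := by
        rw [← ENNReal.rpow_add _ _ hB0 hBt]
        congr 1
        rw [hq₁def, hq₂def]; ring
      have hdiv : ρ ^ q₁ = A ^ q₁ * (B ^ q₁)⁻¹ := by
        rw [hρdef, ENNReal.div_rpow_of_nonneg _ _ hq₁pos.le, div_eq_mul_inv]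
      rw [hBsplit, hdiv]
      calc B ^ q₂ * B ^ q₁ * (A ^ q₁ * (B ^ q₁)⁻¹)
          = A ^ q₁ * B ^ q₂ * (B ^ q₁ * (B ^ q₁)⁻¹) := by ring
        _ = A ^ q₁ * B ^ q₂ := by
            rw [ENNReal.mul_inv_cancel (my_rpow_ne_zero hB0 hq₁pos)
              (my_rpow_ne_top hB0 hBt q₁), mul_one]
    have halg2 : A ^ p₁ * ρ ^ (-q₂) = A ^ q₁ * B ^ q₂ := by
      have hAsplit : A ^ p₁ = A ^ q₁ * A ^ q₂ := by
        rw [← ENNReal.rpow_add _ _ hA0 hAt]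
        congr 1
        rw [hq₁def, hq₂def]; ring
      have hdiv : ρ ^ (-q₂) = B ^ q₂ * (A ^ q₂)⁻¹ := by
        rw [ENNReal.rpow_neg, hρdef, ENNReal.div_rpow_of_nonneg _ _ hq₂pos.le,
          div_eq_mul_inv, ENNReal.mul_inv (Or.inl (my_rpow_ne_zero hA0 hq₂pos))
            (Or.inl (my_rpow_ne_top hA0 hAt q₂)), inv_inv, mul_comm]
      rw [hAsplit, hdiv]
      calc A ^ q₁ * A ^ q₂ * (B ^ q₂ * (A ^ q₂)⁻¹)
          = A ^ q₁ * B ^ q₂ * (A ^ q₂ * (A ^ q₂)⁻¹) := by ring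
        _ = A ^ q₁ * B ^ q₂ := by
            rw [ENNReal.mul_inv_cancel (my_rpow_ne_zero hA0 hq₂pos)
              (my_rpow_ne_top hA0 hAt q₂), mul_one]
    -- assemble
    calc (∫⁻ z, avgDiff n f x z ^ p₁ / (‖z‖₊ : ℝ≥0∞) ^ ((n:ℝ) + α₁ * p₁))
        = (∫⁻ z in Metric.ball (0 : EuclideanSpace ℝ (Fin n)) R,
              avgDiff n f x z ^ p₁ / (‖z‖₊ : ℝ≥0∞) ^ ((n:ℝ) + α₁ * p₁)) +
          ∫⁻ z in (Metric.ball (0 : EuclideanSpace ℝ (Fin n)) R)ᶜ,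
              avgDiff n f x z ^ p₁ / (‖z‖₊ : ℝ≥0∞) ^ ((n:ℝ) + α₁ * p₁) :=
          (lintegral_add_compl _ measurableSet_ball).symm
      _ ≤ (∫⁻ z in Metric.ball (0 : EuclideanSpace ℝ (Fin n)) R,
              (2:ℝ≥0∞) ^ p₁ * B ^ p₁ * (‖z‖₊ : ℝ≥0∞) ^ e₁) +
          ∫⁻ z in (Metric.ball (0 : EuclideanSpace ℝ (Fin n)) R)ᶜ,
              (2:ℝ≥0∞) ^ p₁ * A ^ p₁ * (‖z‖₊ : ℝ≥0∞) ^ (-((n:ℝ) + α₁ * p₁)) :=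
          add_le_add (lintegral_mono fun z => hpt1 z) (lintegral_mono fun z => hpt2 z)
      _ = (2:ℝ≥0∞) ^ p₁ * B ^ p₁ * (ρ ^ q₁ * c₁) +
          (2:ℝ≥0∞) ^ p₁ * A ^ p₁ * (ρ ^ (-q₂) * c₂) := by
          rw [lintegral_const_mul' _ _ (ENNReal.mul_ne_top h2p hBp),
            lintegral_const_mul' _ _ (ENNReal.mul_ne_top h2p hAp), hscale1, hscale2]
      _ = (2:ℝ≥0∞) ^ p₁ * (c₁ + c₂) * (A ^ q₁ * B ^ q₂) := by
          calc (2:ℝ≥0∞) ^ p₁ * B ^ p₁ * (ρ ^ q₁ * c₁) +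
              (2:ℝ≥0∞) ^ p₁ * A ^ p₁ * (ρ ^ (-q₂) * c₂)
              = (2:ℝ≥0∞) ^ p₁ * c₁ * (B ^ p₁ * ρ ^ q₁) +
                (2:ℝ≥0∞) ^ p₁ * c₂ * (A ^ p₁ * ρ ^ (-q₂)) := by ring
            _ = (2:ℝ≥0∞) ^ p₁ * c₁ * (A ^ q₁ * B ^ q₂) +
                (2:ℝ≥0∞) ^ p₁ * c₂ * (A ^ q₁ * B ^ q₂) := by rw [halg1, halg2]
            _ = _ := by ring
      _ ≤ ((2:ℝ≥0∞) ^ p₁ * (c₁ + c₂) + 1) * (A ^ q₁ * B ^ q₂) :=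
          mul_le_mul_left le_self_add _
      _ = ((2:ℝ≥0∞) ^ p₁ * (c₁ + c₂) + 1) * A ^ q₁ * B ^ q₂ := by rw [mul_assoc]
end
end
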